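/- Let P(t) be a symmetric matrix-valued solution of the Riccati equation dP/dt = A P + P A^T - P C^T Q^{-1} C P + V satisfying p_m I ≤ P(t) ≤ p_M I for constants 0 < p_m ≤ p_M, with V(t) ≥ v_m I (v_m > 0) and Q(t) positive definite. Then along solutions of dx/dt = (A(t) - P C^T Q^{-1} C) x, the function W(x,t) = x^T P(t)^{-1} x satisfies dW/dt ≤ -(v_m/p_M^2) ||x||^2 ≤ -ρ W with ρ = v_m p_m / p_M^2; consequently ||x(t)|| ≤ sqrt(p_M/p_m) e^{-ρ t/2} ||x(0)||. -/

import Mathlib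

open Matrix

attribute [local instance] Matrix.linftyOpNormedAddCommGroup Matrix.linftyOpNormedSpace

attribute [local instance] Matrix.linftyOpNormedRing Matrix.linftyOpNormedAlgebra

section RiccatiAux

variable {n' p' : ℕ}

lemma hasDerivAt_matrix_entry {M : ℝ → Matrix (Fin n') (Fin p') ℝ}
    {M' : Matrix (Fin n') (Fin p') ℝ} {t : ℝ} (h : HasDerivAt M M' t) (i : Fin n') (j : Fin p') :
    HasDerivAt (fun s => M s i j) (M' i j) t := by
  let L : Matrix (Fin n') (Fin p') ℝ →ₗ[ℝ] ℝ :=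
    { toFun := fun A => A i j, map_add' := fun _ _ => rfl, map_smul' := fun _ _ => rfl }
  exact (LinearMap.toContinuousLinearMap L).hasFDerivAt.comp_hasDerivAt t h

lemma hasDerivAt_vec_entry {x : ℝ → (Fin n' → ℝ)} {x' : Fin n' → ℝ} {t : ℝ}
    (h : HasDerivAt x x' t) (i : Fin n') : HasDerivAt (fun s => x s i) (x' i) t := by
  let L : (Fin n' → ℝ) →ₗ[ℝ] ℝ :=
    { toFun := fun v => v i, map_add' := fun _ _ => rfl, map_smul' := fun _ _ => rfl }
  exact (LinearMap.toContinuousLinearMap L).hasFDerivAt.comp_hasDerivAt t h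

lemma hasDerivAt_quadratic {M : ℝ → Matrix (Fin n') (Fin n') ℝ}
    {M' : Matrix (Fin n') (Fin n') ℝ} {x : ℝ → (Fin n' → ℝ)} {x' : Fin n' → ℝ} {t : ℝ}
    (hM : HasDerivAt M M' t) (hx : HasDerivAt x x' t) :
    HasDerivAt (fun s => x s ⬝ᵥ (M s).mulVec (x s))
      (x' ⬝ᵥ (M t).mulVec (x t) + x t ⬝ᵥ M'.mulVec (x t) + x t ⬝ᵥ (M t).mulVec x') t := by
  have key : HasDerivAt (fun s => ∑ i, ∑ j, x s i * (M s i j * x s j))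
      (∑ i, ∑ j, (x' i * (M t i j * x t j) +
        x t i * (M' i j * x t j + M t i j * x' j))) t := by
    apply HasDerivAt.fun_sum; intro i _; apply HasDerivAt.fun_sum; intro j _
    exact (hasDerivAt_vec_entry hx i).mul ((hasDerivAt_matrix_entry hM i j).mul
      (hasDerivAt_vec_entry hx j))
  have e1 : (fun s => ∑ i, ∑ j, x s i * (M s i j * x s j))
      = fun s => x s ⬝ᵥ (M s).mulVec (x s) := by
    funext s; simp [dotProduct, mulVec, Finset.mul_sum]
  have e2 : (∑ i, ∑ j, (x' i * (M t i j * x t j) + x t i * (M' i j * x t j + M t i j * x' j)))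
      = x' ⬝ᵥ (M t).mulVec (x t) + x t ⬝ᵥ M'.mulVec (x t) + x t ⬝ᵥ (M t).mulVec x' := by
    simp [dotProduct, mulVec, Finset.mul_sum, Finset.sum_add_distrib, mul_add]
    ring
  rw [← e1, ← e2]; exact key

lemma hasDerivAt_matrix_inv {P : ℝ → Matrix (Fin n') (Fin n') ℝ}
    {P' : Matrix (Fin n') (Fin n') ℝ} {t : ℝ} (h : HasDerivAt P P' t) (hU : IsUnit (P t)) :
    HasDerivAt (fun s => (P s)⁻¹) (-((P t)⁻¹ * P' * (P t)⁻¹)) t := by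
  obtain ⟨u, hu⟩ := hU
  have hf : HasFDerivAt Ring.inverse
      (-ContinuousLinearMap.mulLeftRight ℝ _ ↑u⁻¹ ↑u⁻¹) (P t) := by
    rw [← hu]; exact hasFDerivAt_ringInverse u
  have hc := hf.comp_hasDerivAt t h
  have e1 : (fun s => Ring.inverse (P s)) = fun s => (P s)⁻¹ := by
    funext s; rw [Matrix.nonsing_inv_eq_ringInverse]
  have e2 : ((-ContinuousLinearMap.mulLeftRight ℝ _
        (↑u⁻¹ : Matrix (Fin n') (Fin n') ℝ) ↑u⁻¹) : _ →L[ℝ] _) P'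
      = -((P t)⁻¹ * P' * (P t)⁻¹) := by
    have : ((u⁻¹ : _ˣ) : Matrix (Fin n') (Fin n') ℝ) = (P t)⁻¹ := by
      rw [← hu, Matrix.coe_units_inv]
    simp [ContinuousLinearMap.mulLeftRight_apply, this, Matrix.mul_assoc]
  rw [← e1, ← e2]; exact hc

lemma psd_dot {M : Matrix (Fin n') (Fin n') ℝ} (h : M.PosSemidef) (v : Fin n' → ℝ) :
    0 ≤ v ⬝ᵥ M.mulVec v := by simpa using h.dotProduct_mulVec_nonneg v

lemma quad_ge {M : Matrix (Fin n') (Fin n') ℝ} {c : ℝ}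
    (h : (M - c • (1 : Matrix (Fin n') (Fin n') ℝ)).PosSemidef) (v : Fin n' → ℝ) :
    c * (v ⬝ᵥ v) ≤ v ⬝ᵥ M.mulVec v := by
  have := psd_dot h v
  rw [sub_mulVec, smul_mulVec, one_mulVec, dotProduct_sub, dotProduct_smul] at this
  simp only [smul_eq_mul] at this; linarith

lemma quad_le {M : Matrix (Fin n') (Fin n') ℝ} {c : ℝ}
    (h : (c • (1 : Matrix (Fin n') (Fin n') ℝ) - M).PosSemidef) (v : Fin n' → ℝ) :
    v ⬝ᵥ M.mulVec v ≤ c * (v ⬝ᵥ v) := by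
  have := psd_dot h v
  rw [sub_mulVec, smul_mulVec, one_mulVec, dotProduct_sub, dotProduct_smul] at this
  simp only [smul_eq_mul] at this; linarith

lemma symm_dot {M : Matrix (Fin n') (Fin n') ℝ} (hM : Mᵀ = M) (u z : Fin n' → ℝ) :
    u ⬝ᵥ M.mulVec z = (M.mulVec u) ⬝ᵥ z := by
  rw [dotProduct_mulVec]; nth_rewrite 1 [← hM]; rw [vecMul_transpose]

lemma dot_mulVec_transpose (M : Matrix (Fin n') (Fin n') ℝ) (u z : Fin n' → ℝ) :
    u ⬝ᵥ Mᵀ.mulVec z = z ⬝ᵥ M.mulVec u := by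
  rw [dotProduct_mulVec, vecMul_transpose, dotProduct_comm]

open scoped MatrixOrder in
lemma exists_symm_sqrt {M : Matrix (Fin n') (Fin n') ℝ} (h : M.PosSemidef) :
    ∃ S : Matrix (Fin n') (Fin n') ℝ, S * S = M ∧ Sᵀ = S := by
  refine ⟨CFC.sqrt M, CFC.sqrt_mul_sqrt_self M h.nonneg, ?_⟩
  have := (CFC.sqrt_nonneg M).posSemidef.isHermitian
  rwa [Matrix.IsHermitian, conjTranspose_eq_transpose_of_trivial] at this

lemma bounds_aux {M : Matrix (Fin n') (Fin n') ℝ} {cl cu : ℝ}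
    (hcu : 0 ≤ cu) (hM : M.PosDef) (hMt : Mᵀ = M)
    (hl : (M - cl • (1 : Matrix (Fin n') (Fin n') ℝ)).PosSemidef)
    (hu : (cu • (1 : Matrix (Fin n') (Fin n') ℝ) - M).PosSemidef) (x : Fin n' → ℝ) :
    x ⬝ᵥ x ≤ cu * (x ⬝ᵥ M⁻¹.mulVec x) ∧ cl * (x ⬝ᵥ M⁻¹.mulVec x) ≤ x ⬝ᵥ x ∧
      x ⬝ᵥ x ≤ cu ^ 2 * ((M⁻¹.mulVec x) ⬝ᵥ (M⁻¹.mulVec x)) := by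
  have hdet : IsUnit M.det := hM.det_pos.ne'.isUnit
  set v := M⁻¹.mulVec x with hv
  have hx : M.mulVec v = x := by
    rw [hv, mulVec_mulVec, Matrix.mul_nonsing_inv _ hdet, one_mulVec]
  have hPsd := hM.posSemidef
  obtain ⟨S, hS, hSt⟩ := exists_symm_sqrt hPsd
  set w := S.mulVec v with hw
  have h1 : x ⬝ᵥ M⁻¹.mulVec x = v ⬝ᵥ M.mulVec v := by
    rw [← hv, ← hx]
    rw [dotProduct_comm, symm_dot hMt]
  have hww : w ⬝ᵥ w = v ⬝ᵥ M.mulVec v := by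
    rw [hw, ← symm_dot hSt, mulVec_mulVec, hS]
  have hxx : x ⬝ᵥ x = w ⬝ᵥ M.mulVec w := by
    have hMv : M.mulVec v = S.mulVec w := by
      conv_rhs => rw [hw, mulVec_mulVec, hS]
    rw [← hx, hMv, ← symm_dot hSt, mulVec_mulVec, hS]
  have b1 : x ⬝ᵥ x ≤ cu * (v ⬝ᵥ M.mulVec v) := by
    rw [hxx, ← hww]; exact quad_le hu w
  have b2 : cl * (v ⬝ᵥ M.mulVec v) ≤ x ⬝ᵥ x := by
    rw [hxx, ← hww]; exact quad_ge hl w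
  have b3 : v ⬝ᵥ M.mulVec v ≤ cu * (v ⬝ᵥ v) := quad_le hu v
  refine ⟨by rw [h1]; exact b1, by rw [h1]; exact b2, ?_⟩
  calc x ⬝ᵥ x ≤ cu * (v ⬝ᵥ M.mulVec v) := b1
    _ ≤ cu * (cu * (v ⬝ᵥ v)) := by exact mul_le_mul_of_nonneg_left b3 hcu
    _ = cu ^ 2 * (v ⬝ᵥ v) := by ring

end RiccatiAux

/-- Riccati-based Lyapunov analysis: if `P(t)` solves the continuous Riccati equation and is
uniformly bounded `p_m I ≤ P(t) ≤ p_M I`, with `V(t) ≥ v_m I` and `Q(t)` positive definite,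
then along solutions of `dx/dt = (A - P Cᵀ Q⁻¹ C)x`, the function `W = xᵀ P⁻¹ x` satisfies
`dW/dt ≤ -(v_m/p_M²)‖x‖² ≤ -ρ W` with `ρ = v_m p_m / p_M²`, and consequently
`‖x(t)‖ ≤ √(p_M/p_m) e^{-ρt/2} ‖x(0)‖` for `t ≥ 0`. -/
theorem riccati_lyapunov_exponential_stability {m p : ℕ}
    (A V P : ℝ → Matrix (Fin m) (Fin m) ℝ)
    (C : ℝ → Matrix (Fin p) (Fin m) ℝ)
    (Q : ℝ → Matrix (Fin p) (Fin p) ℝ)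
    (p_m p_M v_m : ℝ) (hpm : 0 < p_m) (hpmM : p_m ≤ p_M) (hvm : 0 < v_m)
    (hPsymm : ∀ t, (P t).IsSymm)
    (hPder : ∀ t, HasDerivAt P
      (A t * P t + P t * (A t)ᵀ - P t * (C t)ᵀ * (Q t)⁻¹ * C t * P t + V t) t)
    (hPlow : ∀ t, (P t - p_m • (1 : Matrix (Fin m) (Fin m) ℝ)).PosSemidef)
    (hPhigh : ∀ t, (p_M • (1 : Matrix (Fin m) (Fin m) ℝ) - P t).PosSemidef)
    (hV : ∀ t, (V t - v_m • (1 : Matrix (Fin m) (Fin m) ℝ)).PosSemidef)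
    (hQ : ∀ t, (Q t).PosDef)
    (x : ℝ → (Fin m → ℝ))
    (hx : ∀ t, HasDerivAt x
      ((A t - P t * (C t)ᵀ * (Q t)⁻¹ * C t).mulVec (x t)) t) :
    (∀ t, ∃ W' : ℝ,
        HasDerivAt (fun s => x s ⬝ᵥ (P s)⁻¹.mulVec (x s)) W' t ∧
        W' ≤ -(v_m / p_M ^ 2) * (x t ⬝ᵥ x t) ∧
        W' ≤ -(v_m * p_m / p_M ^ 2) * (x t ⬝ᵥ (P t)⁻¹.mulVec (x t))) ∧
    (∀ t : ℝ, 0 ≤ t →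
      Real.sqrt (x t ⬝ᵥ x t) ≤
        Real.sqrt (p_M / p_m) * Real.exp (-(v_m * p_m / p_M ^ 2) * t / 2) *
          Real.sqrt (x 0 ⬝ᵥ x 0)) := by
  classical
  have hpM : 0 < p_M := lt_of_lt_of_le hpm hpmM
  have hPpos : ∀ t, (P t).PosDef := by
    intro t
    have h1 : (p_m • (1 : Matrix (Fin m) (Fin m) ℝ)).PosDef := by
      rw [smul_one_eq_diagonal]
      exact posDef_diagonal_iff.mpr fun i => hpm
    have h2 := h1.add_posSemidef (hPlow t)
    have e : p_m • (1 : Matrix (Fin m) (Fin m) ℝ) + (P t - p_m • 1) = P t := by abel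
    rwa [e] at h2
  have hPt : ∀ t, (P t)ᵀ = P t := fun t => hPsymm t
  have hPit : ∀ t, ((P t)⁻¹)ᵀ = (P t)⁻¹ := fun t => by
    rw [Matrix.transpose_nonsing_inv, hPt]
  have hdet : ∀ t, IsUnit (P t).det := fun t => (hPpos t).det_pos.ne'.isUnit
  have hvx : ∀ t, (P t).mulVec ((P t)⁻¹.mulVec (x t)) = x t := fun t => by
    rw [mulVec_mulVec, Matrix.mul_nonsing_inv _ (hdet t), one_mulVec]
  have hcPSD : ∀ t, ((C t)ᵀ * (Q t)⁻¹ * C t).PosSemidef := by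
    intro t
    have h := ((hQ t).inv.posSemidef).conjTranspose_mul_mul_same (C t)
    rwa [conjTranspose_eq_transpose_of_trivial] at h
  have hbnd := fun t => bounds_aux hpM.le (hPpos t) (hPt t) (hPlow t) (hPhigh t) (x t)
  -- derivative of W with explicit value
  have hder : ∀ t, HasDerivAt (fun s => x s ⬝ᵥ (P s)⁻¹.mulVec (x s))
      (-(x t ⬝ᵥ ((C t)ᵀ * (Q t)⁻¹ * C t).mulVec (x t))
        - ((P t)⁻¹.mulVec (x t) ⬝ᵥ (V t).mulVec ((P t)⁻¹.mulVec (x t)))) t := by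
    intro t
    have hInv := hasDerivAt_matrix_inv (hPder t) (hPpos t).isUnit
    have hq := hasDerivAt_quadratic hInv (hx t)
    convert hq using 1
    -- notation
    set a := A t
    set pp := P t
    set pi := (P t)⁻¹ with hpidef
    set xt := x t with hxtdef
    set cc := (C t)ᵀ * (Q t)⁻¹ * C t with hccdef
    set v := pi.mulVec xt with hvdef
    set x' := (A t - P t * (C t)ᵀ * (Q t)⁻¹ * C t).mulVec xt with hx'def
    set P' := a * pp + pp * aᵀ - pp * (C t)ᵀ * (Q t)⁻¹ * C t * pp + V t with hP'def
    have hsi : ∀ u z, u ⬝ᵥ pi.mulVec z = (pi.mulVec u) ⬝ᵥ z := symm_dot (hPit t)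
    have hsp : ∀ u z, u ⬝ᵥ pp.mulVec z = (pp.mulVec u) ⬝ᵥ z := symm_dot (hPt t)
    have hppv : pp.mulVec v = xt := hvx t
    have t1 : x' ⬝ᵥ pi.mulVec xt = v ⬝ᵥ x' := by rw [← hvdef, dotProduct_comm]
    have t3 : xt ⬝ᵥ pi.mulVec x' = v ⬝ᵥ x' := by rw [hsi, ← hvdef]
    have t2 : xt ⬝ᵥ (-(pi * P' * pi)).mulVec xt = -(v ⬝ᵥ P'.mulVec v) := by
      rw [neg_mulVec, dotProduct_neg]
      congr 1
      rw [Matrix.mul_assoc, ← mulVec_mulVec, ← mulVec_mulVec, hsi, ← hvdef]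
    have hx' : v ⬝ᵥ x' = v ⬝ᵥ a.mulVec xt - xt ⬝ᵥ cc.mulVec xt := by
      have hF : A t - P t * (C t)ᵀ * (Q t)⁻¹ * C t = a - pp * cc := by
        rw [hccdef]; simp only [Matrix.mul_assoc]; rfl
      rw [hx'def, hF, sub_mulVec, dotProduct_sub, ← mulVec_mulVec, hsp, hppv]
    have hP'v : v ⬝ᵥ P'.mulVec v
        = v ⬝ᵥ a.mulVec xt + v ⬝ᵥ a.mulVec xt - xt ⬝ᵥ cc.mulVec xt + v ⬝ᵥ (V t).mulVec v := by
      have hmid : pp * (C t)ᵀ * (Q t)⁻¹ * C t * pp = pp * (cc * pp) := by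
        rw [hccdef]; simp only [Matrix.mul_assoc]
      rw [hP'def, hmid, add_mulVec, sub_mulVec, add_mulVec, dotProduct_add, dotProduct_sub,
        dotProduct_add]
      have e1 : v ⬝ᵥ (a * pp).mulVec v = v ⬝ᵥ a.mulVec xt := by
        rw [← mulVec_mulVec, hppv]
      have e2 : v ⬝ᵥ (pp * aᵀ).mulVec v = v ⬝ᵥ a.mulVec xt := by
        rw [← mulVec_mulVec, hsp, hppv, dot_mulVec_transpose]
      have e3 : v ⬝ᵥ (pp * (cc * pp)).mulVec v = xt ⬝ᵥ cc.mulVec xt := by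
        rw [← mulVec_mulVec, hsp, hppv, ← mulVec_mulVec, hppv]
      rw [e1, e2, e3]
    linarith [t1, t2, t3, hx', hP'v]
  -- the two bounds on the derivative value
  have part1 : ∀ t, ∃ W' : ℝ,
      HasDerivAt (fun s => x s ⬝ᵥ (P s)⁻¹.mulVec (x s)) W' t ∧
      W' ≤ -(v_m / p_M ^ 2) * (x t ⬝ᵥ x t) ∧
      W' ≤ -(v_m * p_m / p_M ^ 2) * (x t ⬝ᵥ (P t)⁻¹.mulVec (x t)) := by
    intro t
    refine ⟨_, hder t, ?_, ?_⟩
    · have h0 := psd_dot (hcPSD t) (x t)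
      have hVv := quad_ge (hV t) ((P t)⁻¹.mulVec (x t))
      have h3 := (hbnd t).2.2
      have key : v_m / p_M ^ 2 * (x t ⬝ᵥ x t)
          ≤ v_m * ((P t)⁻¹.mulVec (x t) ⬝ᵥ (P t)⁻¹.mulVec (x t)) := by
        rw [div_mul_eq_mul_div, div_le_iff₀ (by positivity)]
        calc v_m * (x t ⬝ᵥ x t)
            ≤ v_m * (p_M ^ 2 * ((P t)⁻¹.mulVec (x t) ⬝ᵥ (P t)⁻¹.mulVec (x t))) :=
              mul_le_mul_of_nonneg_left h3 hvm.le
          _ = v_m * ((P t)⁻¹.mulVec (x t) ⬝ᵥ (P t)⁻¹.mulVec (x t)) * p_M ^ 2 := by ring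
      linarith
    · have h1 : -(x t ⬝ᵥ ((C t)ᵀ * (Q t)⁻¹ * C t).mulVec (x t))
          - ((P t)⁻¹.mulVec (x t) ⬝ᵥ (V t).mulVec ((P t)⁻¹.mulVec (x t)))
          ≤ -(v_m / p_M ^ 2) * (x t ⬝ᵥ x t) := by
        have h0 := psd_dot (hcPSD t) (x t)
        have hVv := quad_ge (hV t) ((P t)⁻¹.mulVec (x t))
        have h3 := (hbnd t).2.2
        have key : v_m / p_M ^ 2 * (x t ⬝ᵥ x t)
            ≤ v_m * ((P t)⁻¹.mulVec (x t) ⬝ᵥ (P t)⁻¹.mulVec (x t)) := by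
          rw [div_mul_eq_mul_div, div_le_iff₀ (by positivity)]
          calc v_m * (x t ⬝ᵥ x t)
              ≤ v_m * (p_M ^ 2 * ((P t)⁻¹.mulVec (x t) ⬝ᵥ (P t)⁻¹.mulVec (x t))) :=
                mul_le_mul_of_nonneg_left h3 hvm.le
            _ = v_m * ((P t)⁻¹.mulVec (x t) ⬝ᵥ (P t)⁻¹.mulVec (x t)) * p_M ^ 2 := by ring
        linarith
      refine h1.trans ?_
      have hpmW := (hbnd t).2.1
      have h2 := mul_le_mul_of_nonneg_left hpmW
        (show (0:ℝ) ≤ v_m / p_M ^ 2 by positivity)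
      calc -(v_m / p_M ^ 2) * (x t ⬝ᵥ x t)
          ≤ -(v_m / p_M ^ 2) * (p_m * (x t ⬝ᵥ (P t)⁻¹.mulVec (x t))) := by linarith
        _ = -(v_m * p_m / p_M ^ 2) * (x t ⬝ᵥ (P t)⁻¹.mulVec (x t)) := by ring
  refine ⟨part1, ?_⟩
  -- Gronwall part
  choose D hD hD1 hD2 using part1
  set ρ : ℝ := v_m * p_m / p_M ^ 2 with hρdef
  have hρ : 0 < ρ := by positivity
  set W : ℝ → ℝ := fun s => x s ⬝ᵥ (P s)⁻¹.mulVec (x s) with hWdef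
  have hgd : ∀ s, HasDerivAt (fun y => W y * Real.exp (ρ * y))
      (D s * Real.exp (ρ * s) + W s * (Real.exp (ρ * s) * ρ)) s := by
    intro s
    have he : HasDerivAt (fun y : ℝ => Real.exp (ρ * y)) (Real.exp (ρ * s) * ρ) s := by
      have : HasDerivAt (fun y : ℝ => ρ * y) ρ s := by
        simpa using (hasDerivAt_id s).const_mul ρ
      exact this.exp
    exact (hD s).mul he
  have hanti : Antitone (fun y => W y * Real.exp (ρ * y)) := by
    apply antitone_of_deriv_nonpos
    · exact fun s => (hgd s).differentiableAt
    · intro s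
      rw [(hgd s).deriv]
      have hb := hD2 s
      have he := (Real.exp_pos (ρ * s)).le
      have := mul_le_mul_of_nonneg_right hb he
      have h0 : -(v_m * p_m / p_M ^ 2) * W s * Real.exp (ρ * s)
          + W s * (Real.exp (ρ * s) * ρ) = 0 := by rw [hρdef]; ring
      nlinarith
  intro t ht
  have hg := hanti ht
  simp only [mul_zero, Real.exp_zero, mul_one] at hg
  -- hg : W t * exp (ρ t) ≤ W 0
  have hWt : W t ≤ W 0 * Real.exp (-(ρ) * t) := by
    have e := Real.exp_pos (ρ * t)
    calc W t = W t * (Real.exp (ρ * t) * Real.exp (-(ρ) * t)) := by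
          rw [← Real.exp_add, show ρ * t + -(ρ) * t = 0 by ring, Real.exp_zero, mul_one]
      _ = W t * Real.exp (ρ * t) * Real.exp (-(ρ) * t) := by ring
      _ ≤ W 0 * Real.exp (-(ρ) * t) :=
          mul_le_mul_of_nonneg_right hg (Real.exp_pos _).le
  have hx0 : 0 ≤ x 0 ⬝ᵥ x 0 := by
    unfold dotProduct; exact Finset.sum_nonneg fun i _ => mul_self_nonneg _
  have hchain : x t ⬝ᵥ x t ≤ p_M / p_m * Real.exp (-(ρ) * t) * (x 0 ⬝ᵥ x 0) := by
    have h1 : x t ⬝ᵥ x t ≤ p_M * W t := (hbnd t).1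
    have h2 : p_m * W 0 ≤ x 0 ⬝ᵥ x 0 := (hbnd 0).2.1
    have hW0 : W 0 ≤ (x 0 ⬝ᵥ x 0) / p_m := by rw [le_div_iff₀ hpm]; linarith
    calc x t ⬝ᵥ x t ≤ p_M * W t := h1
      _ ≤ p_M * (W 0 * Real.exp (-(ρ) * t)) := by
          have := mul_le_mul_of_nonneg_right hWt (le_refl (0:ℝ))
          exact mul_le_mul_of_nonneg_left hWt hpM.le
      _ ≤ p_M * ((x 0 ⬝ᵥ x 0) / p_m * Real.exp (-(ρ) * t)) := by
          have := mul_le_mul_of_nonneg_right hW0 (Real.exp_pos (-(ρ) * t)).le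
          exact mul_le_mul_of_nonneg_left this hpM.le
      _ = p_M / p_m * Real.exp (-(ρ) * t) * (x 0 ⬝ᵥ x 0) := by ring
  have hB : (Real.sqrt (p_M / p_m) * Real.exp (-(v_m * p_m / p_M ^ 2) * t / 2) *
      Real.sqrt (x 0 ⬝ᵥ x 0)) ^ 2
      = p_M / p_m * Real.exp (-(ρ) * t) * (x 0 ⬝ᵥ x 0) := by
    rw [mul_pow, mul_pow, Real.sq_sqrt (by positivity), Real.sq_sqrt hx0]
    congr 1
    rw [sq, ← Real.exp_add, hρdef]
    congr 1
    ring
  calc Real.sqrt (x t ⬝ᵥ x t)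
      ≤ Real.sqrt ((Real.sqrt (p_M / p_m) * Real.exp (-(v_m * p_m / p_M ^ 2) * t / 2) *
          Real.sqrt (x 0 ⬝ᵥ x 0)) ^ 2) := by
        apply Real.sqrt_le_sqrt; rw [hB]; exact hchain
    _ = _ := Real.sqrt_sq (by positivity)
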